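/- Let B ≥ 2 and let θ, φ : Fin B → ℝ satisfy ∑_i cos (θ i) = 0, ∑_i sin (θ i) · cos (φ i) = 0 and ∑_i sin (θ i) · sin (φ i) = 0. Then the state ψ : Fin 2 × Fin B × Fin B → ℂ defined by ψ(0, i, i) = (1/√B) · cos (θ i / 2), ψ(1, i, i) = (1/√B) · exp(I · φ i) · sin (θ i / 2), and ψ = 0 whenever the second and third indices differ, is a normalized locally maximally entangled state for dimensions (2, B, B). -/

import Mathlib

open scoped ComplexConjugate

noncomputable section

def rho1 {A B C : ℕ} (ψ : Fin A × Fin B × Fin C → ℂ) : Matrix (Fin A) (Fin A) ℂ :=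
  Matrix.of fun a a' => ∑ b, ∑ c, ψ (a, b, c) * conj (ψ (a', b, c))

def rho2 {A B C : ℕ} (ψ : Fin A × Fin B × Fin C → ℂ) : Matrix (Fin B) (Fin B) ℂ :=
  Matrix.of fun b b' => ∑ a, ∑ c, ψ (a, b, c) * conj (ψ (a, b', c))

def rho3 {A B C : ℕ} (ψ : Fin A × Fin B × Fin C → ℂ) : Matrix (Fin C) (Fin C) ℂ :=
  Matrix.of fun c c' => ∑ a, ∑ b, ψ (a, b, c) * conj (ψ (a, b, c'))

def TriNormalized {A B C : ℕ} (ψ : Fin A × Fin B × Fin C → ℂ) : Prop :=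
  ∑ x, ‖ψ x‖ ^ 2 = 1

def TriIsLME {A B C : ℕ} (ψ : Fin A × Fin B × Fin C → ℂ) : Prop :=
  TriNormalized ψ ∧ rho1 ψ = (1 / (A : ℂ)) • 1 ∧
    rho2 ψ = (1 / (B : ℂ)) • 1 ∧ rho3 ψ = (1 / (C : ℂ)) • 1

def TriLMEExists (A B C : ℕ) : Prop := ∃ ψ : Fin A × Fin B × Fin C → ℂ, TriIsLME ψ

/-- The diagonal (2,B,B) state determined by angles θ, φ. -/
def psi0 (B : ℕ) (θ φ : Fin B → ℝ) : Fin 2 × Fin B × Fin B → ℂ :=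
  fun x =>
    if x.2.1 = x.2.2 then
      (if x.1 = 0 then (((1 / Real.sqrt B) * Real.cos (θ x.2.1 / 2) : ℝ) : ℂ)
       else ((1 / Real.sqrt B : ℝ) : ℂ) * Complex.exp (Complex.I * (φ x.2.1 : ℝ)) *
         ((Real.sin (θ x.2.1 / 2) : ℝ) : ℂ))
    else 0

/-- the diagonal states built from unit vectors in ℝ³ summing to
zero are LME states for dimensions (2, B, B). -/
theorem lme_2BB_construction (B : ℕ) (hB : 2 ≤ B) (θ φ : Fin B → ℝ)
    (h1 : ∑ i, Real.cos (θ i) = 0)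
    (h2 : ∑ i, Real.sin (θ i) * Real.cos (φ i) = 0)
    (h3 : ∑ i, Real.sin (θ i) * Real.sin (φ i) = 0) :
    TriIsLME (psi0 B θ φ) := by
  set ψ := psi0 B θ φ with hψdef
  have hB0 : (0:ℝ) < B := by exact_mod_cast Nat.lt_of_lt_of_le (by norm_num) hB
  have hBne : (B:ℝ) ≠ 0 := ne_of_gt hB0
  have hs : Real.sqrt B ^ 2 = B := Real.sq_sqrt hB0.le
  -- explicit values
  have e0 : ∀ b : Fin B, ψ (0, b, b) = (((1 / Real.sqrt B) * Real.cos (θ b / 2) : ℝ) : ℂ) := by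
    intro b; simp [hψdef, psi0]
  have e1 : ∀ b : Fin B, ψ (1, b, b) = ((1 / Real.sqrt B : ℝ) : ℂ) *
      Complex.exp (Complex.I * (φ b : ℝ)) * ((Real.sin (θ b / 2) : ℝ) : ℂ) := by
    intro b; simp [hψdef, psi0]
  have ez : ∀ (a : Fin 2) (b c : Fin B), b ≠ c → ψ (a, b, c) = 0 := by
    intro a b c h; simp [hψdef, psi0, h]
  -- norms
  have n0 : ∀ b : Fin B, ‖ψ (0, b, b)‖ ^ 2 = Real.cos (θ b / 2) ^ 2 / B := by
    intro b
    rw [e0 b, Complex.norm_real, Real.norm_eq_abs, sq_abs, mul_pow, div_pow, one_pow, hs]; ring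
  have n1 : ∀ b : Fin B, ‖ψ (1, b, b)‖ ^ 2 = Real.sin (θ b / 2) ^ 2 / B := by
    intro b
    rw [e1 b, norm_mul, norm_mul, Complex.norm_real, Complex.norm_real]
    simp only [Complex.norm_exp, Complex.mul_re, Complex.I_re,
      Complex.ofReal_im, Complex.I_im, Complex.ofReal_re]
    rw [Real.norm_eq_abs, Real.norm_eq_abs,
      show (0:ℝ) * φ b - 1 * 0 = 0 by ring, Real.exp_zero, mul_one,
      mul_pow, sq_abs, sq_abs, div_pow, one_pow, hs]
    ring
  have key : ∀ b : Fin B, ‖ψ (0, b, b)‖ ^ 2 + ‖ψ (1, b, b)‖ ^ 2 = 1 / B := by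
    intro b
    rw [n0, n1, ← add_div, add_comm, Real.sin_sq_add_cos_sq]
  have mc : ∀ z : ℂ, z * conj z = ((‖z‖ ^ 2 : ℝ) : ℂ) := by
    intro z
    rw [Complex.mul_conj]; norm_cast
    rw [Complex.normSq_eq_norm_sq]
  -- real sum facts
  have hcosh : ∀ b : Fin B, Real.cos (θ b / 2) ^ 2 = 1 / 2 + Real.cos (θ b) / 2 := by
    intro b
    have := Real.cos_sq (θ b / 2)
    rwa [show 2 * (θ b / 2) = θ b by ring] at this
  have Sc : ∑ b, Real.cos (θ b / 2) ^ 2 = B / 2 := by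
    rw [Finset.sum_congr rfl fun b _ => hcosh b, Finset.sum_add_distrib, Finset.sum_const,
      ← Finset.sum_div, h1]
    simp
    ring
  have Ss : ∑ b, Real.sin (θ b / 2) ^ 2 = B / 2 := by
    have : ∀ b : Fin B, Real.sin (θ b / 2) ^ 2 = 1 - Real.cos (θ b / 2) ^ 2 := by
      intro b
      have := Real.sin_sq_add_cos_sq (θ b / 2); linarith
    rw [Finset.sum_congr rfl fun b _ => this b, Finset.sum_sub_distrib, Sc, Finset.sum_const]
    simp
    ring
  refine ⟨?_, ?_, ?_, ?_⟩
  -- normalization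
  · show ∑ x, ‖ψ x‖ ^ 2 = 1
    rw [Fintype.sum_prod_type]
    have : ∀ a : Fin 2, ∑ y : Fin B × Fin B, ‖ψ (a, y)‖ ^ 2 = ∑ b, ‖ψ (a, b, b)‖ ^ 2 := by
      intro a
      rw [Fintype.sum_prod_type]
      refine Finset.sum_congr rfl fun b _ => ?_
      refine Finset.sum_eq_single_of_mem b (Finset.mem_univ b) fun c _ hc => ?_
      rw [ez a b c (Ne.symm hc)]; simp
    rw [Finset.sum_congr rfl fun a _ => this a, Fin.sum_univ_two, ← Finset.sum_add_distrib,
      Finset.sum_congr rfl fun b _ => key b, Finset.sum_const]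
    simp
    field_simp
  -- rho1
  · ext a a'
    have col : ∀ a a' : Fin 2, rho1 ψ a a' = ∑ b, ψ (a, b, b) * conj (ψ (a', b, b)) := by
      intro a a'
      show (∑ b, ∑ c, ψ (a, b, c) * conj (ψ (a', b, c))) = _
      refine Finset.sum_congr rfl fun b _ => ?_
      refine Finset.sum_eq_single_of_mem b (Finset.mem_univ b) fun c _ hc => ?_
      rw [ez a b c (Ne.symm hc)]; simp
    have off : ∑ b, ψ (0, b, b) * conj (ψ (1, b, b)) = 0 := by
      have term : ∀ b : Fin B, ψ (0, b, b) * conj (ψ (1, b, b)) =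
          ((Real.sin (θ b) * Real.cos (φ b) / (2 * B) : ℝ) : ℂ) -
          ((Real.sin (θ b) * Real.sin (φ b) / (2 * B) : ℝ) : ℂ) * Complex.I := by
        intro b
        have hsin : Real.sin (θ b) = 2 * Real.sin (θ b / 2) * Real.cos (θ b / 2) := by
          have := Real.sin_two_mul (θ b / 2)
          rw [show 2 * (θ b / 2) = θ b by ring] at this; linarith
        rw [e0 b, e1 b, mul_comm Complex.I ((φ b : ℝ) : ℂ), Complex.exp_mul_I]
        simp only [map_mul, map_add, Complex.conj_ofReal, Complex.conj_I,
          ← Complex.ofReal_cos, ← Complex.ofReal_sin]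
        rw [Complex.ext_iff]
        constructor <;>
          simp only [Complex.mul_re, Complex.mul_im, Complex.add_re, Complex.add_im,
            Complex.sub_re, Complex.sub_im, Complex.ofReal_re, Complex.ofReal_im,
            Complex.I_re, Complex.I_im, Complex.neg_re, Complex.neg_im] <;>
          · field_simp
            rw [hsin]
            ring_nf
            rw [Real.sq_sqrt hB0.le]
            ring
      rw [Finset.sum_congr rfl fun b _ => term b, Finset.sum_sub_distrib, ← Finset.sum_mul,
        ← Complex.ofReal_sum, ← Complex.ofReal_sum, ← Finset.sum_div, ← Finset.sum_div, h2, h3]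
      simp
    have diag0 : ∑ b, ψ (0, b, b) * conj (ψ (0, b, b)) = 1 / 2 := by
      rw [Finset.sum_congr rfl fun b _ => by rw [mc, n0 b]]
      rw [← Complex.ofReal_sum, ← Finset.sum_div, Sc]
      rw [show (B:ℝ) / 2 / B = 1 / 2 by field_simp]
      norm_num
    have diag1 : ∑ b, ψ (1, b, b) * conj (ψ (1, b, b)) = 1 / 2 := by
      rw [Finset.sum_congr rfl fun b _ => by rw [mc, n1 b]]
      rw [← Complex.ofReal_sum, ← Finset.sum_div, Ss]
      rw [show (B:ℝ) / 2 / B = 1 / 2 by field_simp]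
      norm_num
    have off' : ∑ b, ψ (1, b, b) * conj (ψ (0, b, b)) = 0 := by
      have : ∑ b, ψ (1, b, b) * conj (ψ (0, b, b)) =
          conj (∑ b, ψ (0, b, b) * conj (ψ (1, b, b))) := by
        rw [map_sum]
        refine Finset.sum_congr rfl fun b _ => ?_
        simp [mul_comm]
      rw [this, off, map_zero]
    rw [col a a']
    fin_cases a <;> fin_cases a' <;>
      simp [Matrix.smul_apply, Matrix.one_apply, diag0, diag1, off, off']
  -- rho2
  · ext b b'
    by_cases hbb : b = b'
    · subst hbb
      show (∑ a, ∑ c, ψ (a, b, c) * conj (ψ (a, b, c))) = _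
      have : ∀ a : Fin 2, ∑ c, ψ (a, b, c) * conj (ψ (a, b, c)) =
          ψ (a, b, b) * conj (ψ (a, b, b)) := by
        intro a
        refine Finset.sum_eq_single_of_mem b (Finset.mem_univ b) fun c _ hc => ?_
        rw [ez a b c (Ne.symm hc)]; simp
      rw [Finset.sum_congr rfl fun a _ => this a, Fin.sum_univ_two, mc, mc,
        ← Complex.ofReal_add, key b]
      simp [Matrix.smul_apply, Matrix.one_apply]
    · show (∑ a, ∑ c, ψ (a, b, c) * conj (ψ (a, b', c))) = _
      rw [Finset.sum_eq_zero fun a _ => Finset.sum_eq_zero fun c _ => ?_]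
      · simp [Matrix.smul_apply, Matrix.one_apply, hbb]
      · by_cases h : b = c
        · subst h
          rw [ez a b' b fun h' => hbb h'.symm]; simp
        · rw [ez a b c h]; simp
  -- rho3
  · ext c c'
    by_cases hcc : c = c'
    · subst hcc
      show (∑ a, ∑ b, ψ (a, b, c) * conj (ψ (a, b, c))) = _
      have : ∀ a : Fin 2, ∑ b, ψ (a, b, c) * conj (ψ (a, b, c)) =
          ψ (a, c, c) * conj (ψ (a, c, c)) := by
        intro a
        refine Finset.sum_eq_single_of_mem c (Finset.mem_univ c) fun b _ hb => ?_
        rw [ez a b c hb]; simp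
      rw [Finset.sum_congr rfl fun a _ => this a, Fin.sum_univ_two, mc, mc,
        ← Complex.ofReal_add, key c]
      simp [Matrix.smul_apply, Matrix.one_apply]
    · show (∑ a, ∑ b, ψ (a, b, c) * conj (ψ (a, b, c'))) = _
      rw [Finset.sum_eq_zero fun a _ => Finset.sum_eq_zero fun b _ => ?_]
      · simp [Matrix.smul_apply, Matrix.one_apply, hcc]
      · by_cases h : b = c
        · subst h
          rw [ez a b c' fun h' => hcc (h' ▸ rfl)]
          simp
        · rw [ez a b c h]; simp
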